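/- The collection I₀ = {A ⊆ ω^ω : A has an F_σ superset B such that no T ∈ Q₀ satisfies [T] ⊆ B} is a σ-ideal: it is downward closed under subsets and closed under countable unions. -/

import Mathlib

/-- The finite initial segment of `x` of length `n`, as a list. -/
def res (x : ℕ → ℕ) (n : ℕ) : List ℕ := (List.range n).map x

/-- A (nonempty, initial-segment-closed) tree of finite sequences of naturals. -/
def IsTree (T : Set (List ℕ)) : Prop :=
  T.Nonempty ∧ ∀ t ∈ T, ∀ s, s <+: t → s ∈ T

/-- The set of infinite branches of a tree. -/
def branches (T : Set (List ℕ)) : Set (ℕ → ℕ) := {x | ∀ n, res x n ∈ T}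

/-- The set of (values of) immediate successors of `t` in `T`. -/
def succs (T : Set (List ℕ)) (t : List ℕ) : Set ℕ := {a | t ++ [a] ∈ T}

/-- The poset `Q₀`: every node extends to nodes of arbitrarily large norm. -/
def Q0 (norm : List ℕ → Set ℕ → ℝ) (T : Set (List ℕ)) : Prop :=
  IsTree T ∧ ∀ n : ℕ, ∀ s ∈ T, ∃ t ∈ T, s <+: t ∧ (n : ℝ) < norm t (succs T t)

/-- `t` is an initial segment of the infinite sequence `x`. -/
def prefixOf (t : List ℕ) (x : ℕ → ℕ) : Prop := t = res x t.length

/-- Adam's move: a candidate one-step extension value together with the further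
(arbitrary) extension to be used in case Eve accepts the candidate. -/
abbrev AMove : Type := ℕ × List ℕ

/-- State of the game `G₀`: the current node `tₙ`, the current stage `n`, and the set of
candidate one-step extension values Adam has offered so far at the current stage. -/
structure GState where
  node : List ℕ
  stage : ℕ
  cands : Set ℕ

/-- One round of `G₀`: Adam offers candidate `m.1` (with prospective tail `m.2`),
Eve accepts (`b = true`) or rejects. -/
def step (s : GState) (m : AMove) (b : Bool) : GState :=
  if b then ⟨s.node ++ m.1 :: m.2, s.stage + 1, ∅⟩
  else ⟨s.node, s.stage, s.cands ∪ {m.1}⟩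

/-- The state before round `k` of the play `(a, e)`; round `0` is special: Adam announces
the initial node `t₀` (as the tail component of his move, Eve's reply being ignored). -/
def gstate (a : ℕ → AMove) (e : ℕ → Bool) : ℕ → GState
  | 0 => ⟨[], 0, ∅⟩
  | 1 => ⟨(a 0).2, 0, ∅⟩
  | k + 2 => step (gstate a e (k + 1)) (a (k + 1)) (e (k + 1))

/-- Adam wins the play `(a, e)` of `G₀(A)` iff either from some round on Eve never accepts
and the creature Adam builds at that eternal stage `n` has norm `≥ n`, or else all stages are
completed and the resulting real belongs to `A`. -/
def AdamWins (norm : List ℕ → Set ℕ → ℝ) (A : Set (ℕ → ℕ))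
    (a : ℕ → AMove) (e : ℕ → Bool) : Prop :=
  (∃ k₀, 1 ≤ k₀ ∧ (∀ k, k₀ ≤ k → (gstate a e k).stage = (gstate a e k₀).stage) ∧
    ((gstate a e k₀).stage : ℝ) ≤
      norm (gstate a e k₀).node {c | ∃ k, k₀ ≤ k ∧ c ∈ (gstate a e k).cands}) ∨
  ((∀ n : ℕ, ∃ k, n ≤ (gstate a e k).stage) ∧ ∃ x ∈ A, ∀ k, prefixOf (gstate a e k).node x)

/-- Histories of the game: the sequence of (Adam move, Eve reply) pairs so far. -/
abbrev History := List (AMove × Bool)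

/-- The history of the first `k` rounds of the play `(a, e)`. -/
def hist (a : ℕ → AMove) (e : ℕ → Bool) (k : ℕ) : History :=
  (List.range k).map fun i => (a i, e i)

/-- The play `(a, e)` follows Adam's strategy `σ`. -/
def FollowsA (σ : History → AMove) (a : ℕ → AMove) (e : ℕ → Bool) : Prop :=
  ∀ k, a k = σ (hist a e k)

/-- The play `(a, e)` follows Eve's strategy `τ`. -/
def FollowsE (τ : History → AMove → Bool) (a : ℕ → AMove) (e : ℕ → Bool) : Prop :=
  ∀ k, e k = τ (hist a e k) (a k)

/-- The collection `I₀` of all sets with an `F_σ` superset containing no branch set of a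
`Q₀`-tree. -/
def I0 (norm : List ℕ → Set ℕ → ℝ) : Set (Set (ℕ → ℕ)) :=
  {A | ∃ B : Set (ℕ → ℕ), A ⊆ B ∧
    (∃ F : ℕ → Set (ℕ → ℕ), (∀ n, IsClosed (F n)) ∧ B = ⋃ n, F n) ∧
    ∀ T : Set (List ℕ), Q0 norm T → ¬ branches T ⊆ B}

namespace I0Aux

lemma res_length (x : ℕ → ℕ) (n : ℕ) : (res x n).length = n := by simp [res]

lemma res_getElem (x : ℕ → ℕ) {n i : ℕ} (h : i < (res x n).length) :
    (res x n)[i] = x i := by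
  simp [res]

lemma res_getD (x : ℕ → ℕ) {n i : ℕ} (h : i < n) : (res x n).getD i 0 = x i := by
  have h' : i < (res x n).length := by rw [res_length]; exact h
  rw [List.getD_eq_getElem _ _ h']
  exact res_getElem x h'

lemma res_eq_of_agree {x y : ℕ → ℕ} {n : ℕ} (h : ∀ i < n, y i = x i) :
    res y n = res x n := by
  simp only [res]
  exact List.map_congr_left fun i hi => h i (List.mem_range.1 hi)

lemma prefix_comm {l₁ l₂ l₃ : List ℕ} (h₁ : l₁ <+: l₃) (h₂ : l₂ <+: l₃) :
    l₁ <+: l₂ ∨ l₂ <+: l₁ := by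
  rw [List.prefix_iff_eq_take] at h₁ h₂
  rcases le_total l₁.length l₂.length with h | h
  · exact Or.inl (h₁ ▸ h₂ ▸ List.take_prefix_take_left h)
  · exact Or.inr (h₁ ▸ h₂ ▸ List.take_prefix_take_left h)

lemma exists_succ {norm : List ℕ → Set ℕ → ℝ} {T : Set (List ℕ)} (hT : Q0 norm T)
    {t : List ℕ} (ht : t ∈ T) : ∃ a, t ++ [a] ∈ T := by
  obtain ⟨n, hn⟩ := exists_nat_gt (norm t (succs T t))
  obtain ⟨t', ht', hpre, hnorm⟩ := hT.2 n t ht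
  obtain ⟨r, hr⟩ := hpre
  match r, hr with
  | [], hr =>
    exfalso
    simp only [List.append_nil] at hr
    subst hr
    exact absurd hnorm (not_lt.2 hn.le)
  | a :: r', hr =>
    exact ⟨a, hT.1.2 t' ht' _ ⟨r', by simpa using hr⟩⟩

lemma exists_branch {norm : List ℕ → Set ℕ → ℝ} {T : Set (List ℕ)} (hT : Q0 norm T)
    {s : List ℕ} (hs : s ∈ T) :
    ∃ x, x ∈ branches T ∧ s = res x s.length := by
  classical
  let f : {t // t ∈ T} → {t // t ∈ T} := fun p =>
    ⟨p.1 ++ [(exists_succ hT p.2).choose], (exists_succ hT p.2).choose_spec⟩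
  let g : ℕ → {t // t ∈ T} := fun n => f^[n] ⟨s, hs⟩
  have hstep : ∀ n, ∃ a, (g (n + 1)).1 = (g n).1 ++ [a] := by
    intro n
    have h : g (n + 1) = f (g n) := Function.iterate_succ_apply' f n ⟨s, hs⟩
    exact ⟨_, by rw [h]⟩
  have hlen : ∀ n, (g n).1.length = s.length + n := by
    intro n
    induction n with
    | zero => rfl
    | succ n ih =>
      obtain ⟨a, ha⟩ := hstep n
      simp [ha, ih, Nat.add_assoc]
  have hchain : ∀ m n, m ≤ n → (g m).1 <+: (g n).1 := by
    intro m n h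
    induction n with
    | zero => simp_all
    | succ n ih =>
      rcases Nat.lt_succ_iff_lt_or_eq.1 (Nat.lt_succ_of_le h) with h' | h'
      · obtain ⟨a, ha⟩ := hstep n
        exact (ih (Nat.lt_succ_iff.1 h')).trans (ha ▸ List.prefix_append _ _)
      · subst h'; exact List.prefix_rfl
  set x : ℕ → ℕ := fun k => (g (k + 1)).1.getD k 0 with hxdef
  have hx : ∀ n k, k < n → x k = (g n).1.getD k 0 := by
    intro n k hkn
    have hpre := hchain (k + 1) n hkn
    have hk1 : k < (g (k + 1)).1.length := by rw [hlen]; omega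
    have hk2 : k < (g n).1.length := by rw [hlen]; omega
    rw [hxdef]
    simp only
    rw [List.getD_eq_getElem _ _ hk1, List.getD_eq_getElem _ _ hk2]
    exact hpre.getElem hk1
  have hres : ∀ n, res x n = (g n).1.take n := by
    intro n
    apply List.ext_getElem
    · rw [res_length, List.length_take, hlen]; omega
    · intro i h1 h2
      rw [res_getElem]
      rw [List.getElem_take]
      have hi : i < n := by simpa [res_length] using h1
      have hilen : i < (g n).1.length := by rw [hlen]; omega
      rw [hx n i hi, List.getD_eq_getElem _ _ hilen]
  refine ⟨x, fun n => ?_, ?_⟩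
  · rw [hres n]
    exact hT.1.2 _ (g n).2 _ (List.take_prefix _ _)
  · rw [hres s.length]
    have : s <+: (g s.length).1 := hchain 0 s.length (Nat.zero_le _)
    exact List.prefix_iff_eq_take.1 this

lemma isClosed_branches (T : Set (List ℕ)) : IsClosed (branches T) := by
  have h : branches T = ⋂ n, {x | res x n ∈ T} := by
    ext x; simp [branches]
  rw [h]
  refine isClosed_iInter fun n => ?_
  rw [← isOpen_compl_iff]
  rw [isOpen_iff_forall_mem_open]
  intro x hx
  refine ⟨Set.pi (↑(Finset.range n)) (fun i => {x i}), ?_, ?_, ?_⟩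
  · intro y hy
    have : res y n = res x n :=
      res_eq_of_agree fun i hi => hy i (by simpa using hi)
    simpa [this] using hx
  · exact isOpen_set_pi (Finset.range n).finite_toSet fun a _ => isOpen_discrete _
  · intro i _; rfl

lemma cylinder_subset {U : Set (ℕ → ℕ)} (hU : IsOpen U) {x : ℕ → ℕ} (hx : x ∈ U) :
    ∃ n, ∀ y, (∀ i < n, y i = x i) → y ∈ U := by
  obtain ⟨I, u, hu, hsub⟩ := isOpen_pi_iff.1 hU x hx
  refine ⟨I.sup id + 1, fun y hy => hsub fun i hi => ?_⟩
  have : i < I.sup id + 1 := Nat.lt_succ_of_le (Finset.le_sup (f := id) hi)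
  rw [hy i this]
  exact (hu i hi).2

end I0Aux

open I0Aux in
/-- `I₀` is a σ-ideal: downward closed and closed under countable unions. -/
theorem I0_sigma_ideal (norm : List ℕ → Set ℕ → ℝ)
    (hnn : ∀ t X, 0 ≤ norm t X)
    (hmono : ∀ t, ∀ X Y : Set ℕ, X ⊆ Y → norm t X ≤ norm t Y)
    (hBorel : ∀ t : List ℕ, Measurable fun X : ℕ → Bool => norm t {n | X n = true})
    (hfull : Q0 norm Set.univ) :
    (∀ A A' : Set (ℕ → ℕ), A' ⊆ A → A ∈ I0 norm → A' ∈ I0 norm) ∧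
    (∀ f : ℕ → Set (ℕ → ℕ), (∀ n, f n ∈ I0 norm) → (⋃ n, f n) ∈ I0 norm) := by
  constructor
  · rintro A A' hsub ⟨B, hAB, hFσ, hB⟩
    exact ⟨B, hsub.trans hAB, hFσ, hB⟩
  · intro f hf
    choose B hfB hFσ hB using hf
    choose F hFcl hBF using hFσ
    refine ⟨⋃ n, B n, Set.iUnion_mono hfB,
      ⟨fun k => F (Nat.unpair k).1 (Nat.unpair k).2, fun k => hFcl _ _, ?_⟩, ?_⟩
    · ext y
      simp only [Set.mem_iUnion]
      constructor
      · rintro ⟨n, hy⟩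
        rw [hBF n] at hy
        obtain ⟨k, hk⟩ := Set.mem_iUnion.1 hy
        exact ⟨Nat.pair n k, by simpa [Nat.unpair_pair] using hk⟩
      · rintro ⟨k, hk⟩
        refine ⟨(Nat.unpair k).1, ?_⟩
        rw [hBF]
        exact Set.mem_iUnion.2 ⟨(Nat.unpair k).2, hk⟩
    · -- no Q0 tree has its branch set inside the union
      intro T hT hTsub
      -- the branch set is a nonempty closed, hence Polish and Baire, subspace
      obtain ⟨s₀, hs₀⟩ := hT.1.1
      obtain ⟨x₀, hx₀, _⟩ := exists_branch hT hs₀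
      have hScl : IsClosed (branches T) := isClosed_branches T
      letI : MetricSpace (ℕ → ℕ) := PiNat.metricSpaceNatNat
      haveI : CompleteSpace (branches T) := hScl.completeSpace_coe
      haveI : BaireSpace (branches T) := inferInstance
      haveI : Nonempty (branches T) := ⟨⟨x₀, hx₀⟩⟩
      -- Baire category: some F n k has nonempty interior in the branch set
      have hcover : (⋃ p : ℕ × ℕ, (Subtype.val ⁻¹' F p.1 p.2 : Set (branches T)))
          = Set.univ := by
        ext ⟨y, hy⟩
        simp only [Set.mem_iUnion, Set.mem_univ, iff_true, Set.mem_preimage]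
        have := hTsub hy
        obtain ⟨n, hn⟩ := Set.mem_iUnion.1 this
        rw [hBF n] at hn
        obtain ⟨k, hk⟩ := Set.mem_iUnion.1 hn
        exact ⟨⟨n, k⟩, hk⟩
      obtain ⟨⟨n, k⟩, ⟨x, hxint⟩⟩ := nonempty_interior_of_iUnion_of_closed
        (f := fun p : ℕ × ℕ => (Subtype.val ⁻¹' F p.1 p.2 : Set (branches T)))
        (fun p => (hFcl p.1 p.2).preimage continuous_subtype_val) hcover
      -- extract a basic open cylinder inside F n k
      obtain ⟨t, htsub, htop, hxt⟩ := mem_interior.1 hxint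
      obtain ⟨V, hVop, hVt⟩ := isOpen_induced_iff.1 htop
      have hxV : (x : ℕ → ℕ) ∈ V := by rw [← hVt] at hxt; exact hxt
      obtain ⟨m, hm⟩ := cylinder_subset hVop hxV
      set s : List ℕ := res (x : ℕ → ℕ) m with hsdef
      have hslen : s.length = m := res_length _ _
      have hsT : s ∈ T := x.2 m
      -- every branch of T through s lies in F n k
      have hkey : ∀ y, y ∈ branches T → res y m = s → y ∈ F n k := by
        intro y hy hres
        have hyV : y ∈ V := by
          apply hm
          intro i hi
          have h1 : (res y m).getD i 0 = y i := res_getD y hi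
          have h2 : (res (x : ℕ → ℕ) m).getD i 0 = (x : ℕ → ℕ) i := res_getD _ hi
          rw [← h1, hres, hsdef]
          exact h2
        have : (⟨y, hy⟩ : branches T) ∈ t := by rw [← hVt]; exact hyV
        exact htsub this
      -- the restriction of T to nodes comparable with s
      set T' : Set (List ℕ) := {u | u ∈ T ∧ (u <+: s ∨ s <+: u)} with hT'def
      have hsT' : s ∈ T' := ⟨hsT, Or.inl List.prefix_rfl⟩
      have hmain : ∀ (j : ℕ) (base : List ℕ), base ∈ T → s <+: base →
          ∃ t ∈ T', base <+: t ∧ (j : ℝ) < norm t (succs T' t) := by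
        intro j base hbase hsb
        obtain ⟨t, htT, hbt, hnorm⟩ := hT.2 j base hbase
        have hst : s <+: t := hsb.trans hbt
        have hsuccs : succs T' t = succs T t := by
          ext a
          simp only [succs, hT'def, Set.mem_setOf_eq]
          exact ⟨fun h => h.1, fun h => ⟨h, Or.inr (hst.trans (List.prefix_append _ _))⟩⟩
        exact ⟨t, ⟨htT, Or.inr hst⟩, hbt, by rwa [hsuccs]⟩
      have hQ0' : Q0 norm T' := by
        refine ⟨⟨⟨s, hsT'⟩, ?_⟩, ?_⟩
        · rintro u ⟨huT, hcomp⟩ v hv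
          refine ⟨hT.1.2 u huT v hv, ?_⟩
          rcases hcomp with h | h
          · exact Or.inl (hv.trans h)
          · exact prefix_comm hv h
        · intro j u hu
          rcases hu.2 with h | h
          · obtain ⟨t, ht', hst', hn'⟩ := hmain j s hsT List.prefix_rfl
            exact ⟨t, ht', h.trans hst', hn'⟩
          · exact hmain j u hu.1 h
      -- branches of T' land in F n k ⊆ B n : contradiction
      refine hB n T' hQ0' ?_
      intro y hy
      have hyT : y ∈ branches T := fun j => (hy j).1
      have hyres : res y m = s := by
        have := (hy m).2
        have hl : (res y m).length = s.length := by rw [res_length, hslen]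
        rcases this with h | h
        · exact h.eq_of_length hl
        · exact (h.eq_of_length hl.symm).symm
      have := hkey y hyT hyres
      rw [hBF n]
      exact Set.mem_iUnion.2 ⟨k, this⟩
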